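/- Let (G,·,e,⊙) be a left group-e-semigroup, let f(x) := e⊙x, let Ω := f(G) = {e⊙x : x ∈ G}, and let Δ := {x·(e⊙x)⁻¹ : x ∈ G} (inverses taken in the group (G,·)). Then: (i) f is a strong decomposer, i.e. e⊙((x·(e⊙x)⁻¹)·y) = e⊙y and e⊙(x·((e⊙y)⁻¹·y)) = e⊙x for all x,y ∈ G; (ii) Δ is a normal subgroup of (G,·), and Δ = {(e⊙x)⁻¹·x : x ∈ G}; (iii) G factors directly as G = Δ·Ω: every g ∈ G is written as g = (g·(e⊙g)⁻¹)·(e⊙g) with g·(e⊙g)⁻¹ ∈ Δ and e⊙g ∈ Ω, and this representation is unique, i.e. if g = d·w with d ∈ Δ and w ∈ Ω then w = e⊙g and d = g·(e⊙g)⁻¹. In other words, f is the right projection P_Ω with respect to the factorization G = Δ·Ω. -/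
import Mathlib


/-- Let `(G, ·, e, ⊙)` be a left group-`e`-semigroup (group identity
`e = 1`), let `f x := e ⊙ x`, `Ω := f(G)` and `Δ := {x · (e ⊙ x)⁻¹ : x ∈ G}`. Then:
(i) `f` is a strong decomposer;
(ii) `Δ` is a normal subgroup of `(G, ·)` and `Δ = {(e ⊙ x)⁻¹ · x : x ∈ G}`;
(iii) `G = Δ · Ω` is a direct factorization: every `g` equals
`(g · (e ⊙ g)⁻¹) · (e ⊙ g)` with the two factors in `Δ` and `Ω` respectively, and
this representation is unique. Thus `f` is the right projection `P_Ω`. -/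
theorem stmt_12 {G : Type*} [Group G] (op : G → G → G)
    (hassoc : ∀ x y z : G, op (op x y) z = op x (op y z))
    (hjoin : ∀ x y : G, op 1 (x * y) = op 1 (op x y)) :
    (∀ x y : G, op 1 ((x * (op 1 x)⁻¹) * y) = op 1 y ∧
      op 1 (x * ((op 1 y)⁻¹ * y)) = op 1 x) ∧
    ((∃ N : Subgroup G, N.Normal ∧
        (N : Set G) = {d : G | ∃ x : G, d = x * (op 1 x)⁻¹}) ∧
      {d : G | ∃ x : G, d = x * (op 1 x)⁻¹} =
        {d : G | ∃ x : G, d = (op 1 x)⁻¹ * x}) ∧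
    (∀ g : G,
      g * (op 1 g)⁻¹ ∈ {d : G | ∃ x : G, d = x * (op 1 x)⁻¹} ∧
      op 1 g ∈ Set.range (op 1) ∧
      g = (g * (op 1 g)⁻¹) * op 1 g ∧
      ∀ d ∈ {d : G | ∃ x : G, d = x * (op 1 x)⁻¹}, ∀ w ∈ Set.range (op 1),
        g = d * w → w = op 1 g ∧ d = g * (op 1 g)⁻¹) := by
  -- key computation rules
  have F : ∀ x y : G, op 1 (x * y) = op (op 1 x) y := fun x y =>
    (hjoin x y).trans (hassoc 1 x y).symm
  have idem : ∀ x : G, op 1 (op 1 x) = op 1 x := fun x => by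
    rw [← hjoin, one_mul]
  have L : ∀ {x x' : G} (y : G), op 1 x = op 1 x' → op 1 (x * y) = op 1 (x' * y) := by
    intro x x' y h
    rw [F, F, h]
  have Rf : ∀ x z : G, op 1 (x * op 1 z) = op 1 (x * z) := by
    intro x z
    rw [F, F, ← hassoc]
    congr 1
    calc op (op 1 x) 1 = op 1 (x * 1) := (F x 1).symm
      _ = op 1 x := by rw [mul_one]
  have Rgen : ∀ (x : G) {z z' : G}, op 1 z = op 1 z' → op 1 (x * z) = op 1 (x * z') := by
    intro x z z' h
    rw [← Rf x z, ← Rf x z', h]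
  have hD1 : ∀ x : G, op 1 (x * (op 1 x)⁻¹) = op 1 1 := by
    intro x
    have := L (x := op 1 x) (x' := x) (op 1 x)⁻¹ (idem x)
    rw [← this, mul_inv_cancel]
  have hD2 : ∀ x : G, op 1 ((op 1 x)⁻¹ * x) = op 1 1 := by
    intro x
    rw [← Rf ((op 1 x)⁻¹) x, inv_mul_cancel]
  -- the kernel set
  have memK : ∀ d : G, (∃ x : G, d = x * (op 1 x)⁻¹) ↔ op 1 d = op 1 1 := by
    intro d
    constructor
    · rintro ⟨x, rfl⟩; exact hD1 x
    · intro hd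
      refine ⟨d * op 1 1, ?_⟩
      have : op 1 (d * op 1 1) = op 1 1 := by
        rw [Rf d 1, mul_one, hd]
      rw [this, mul_inv_cancel_right]
  have memK' : ∀ d : G, (∃ x : G, d = (op 1 x)⁻¹ * x) ↔ op 1 d = op 1 1 := by
    intro d
    constructor
    · rintro ⟨x, rfl⟩; exact hD2 x
    · intro hd
      refine ⟨op 1 1 * d, ?_⟩
      have : op 1 (op 1 1 * d) = op 1 1 := by
        have h1 : op 1 (op 1 1) = op 1 (1 : G) := idem 1
        rw [L d h1, one_mul, hd]
      rw [this, inv_mul_cancel_left]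
  refine ⟨?_, ⟨⟨?_, ?_⟩, ?_⟩⟩
  · intro x y
    constructor
    · rw [L y (hD1 x), one_mul]
    · have h : op 1 ((op 1 y)⁻¹ * y) = op 1 (1 : G) := hD2 y
      rw [Rgen x h, mul_one]
  · -- normal subgroup
    refine ⟨{ carrier := {g : G | op 1 g = op 1 1}
              one_mem' := rfl
              mul_mem' := ?_
              inv_mem' := ?_ }, ⟨?_⟩, ?_⟩
    · intro a b ha hb
      simp only [Set.mem_setOf_eq] at *
      rw [L b ha, one_mul, hb]
    · intro a ha
      simp only [Set.mem_setOf_eq] at *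
      calc op 1 a⁻¹ = op 1 (a⁻¹ * 1) := by rw [mul_one]
        _ = op 1 (a⁻¹ * op 1 1) := (Rf a⁻¹ 1).symm
        _ = op 1 (a⁻¹ * op 1 a) := by rw [ha]
        _ = op 1 (a⁻¹ * a) := Rf a⁻¹ a
        _ = op 1 1 := by rw [inv_mul_cancel]
    · intro a ha g
      show op 1 (g * a * g⁻¹) = op 1 1
      have ha' : op 1 a = op 1 1 := ha
      have h1 : op 1 (a * g⁻¹) = op 1 (g⁻¹) := by rw [L g⁻¹ ha', one_mul]
      rw [mul_assoc, Rgen g h1, mul_inv_cancel]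
    · ext d
      simp only [SetLike.mem_coe, Subgroup.mem_mk, Set.mem_setOf_eq]
      exact (memK d).symm
  · ext d
    simp only [Set.mem_setOf_eq]
    rw [memK d, memK' d]
  · intro g
    refine ⟨⟨g, rfl⟩, ⟨g, rfl⟩, by rw [inv_mul_cancel_right], ?_⟩
    rintro d hd w ⟨x, rfl⟩ hg
    have hdK : op 1 d = op 1 1 := (memK d).mp hd
    have hw : op 1 g = op 1 x := by
      rw [hg, L (op 1 x) hdK, one_mul, idem]
    constructor
    · rw [hw]
    · rw [hw, hg, mul_inv_cancel_right]
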